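/- Let N ≥ 3 and let m be an integer with 2 ≤ m ≤ ⌊N/2⌋, and set σ_m = sin²(πm/N)/sin²(π/N). Then for every ξ : ℤ/Nℤ → ℝ one has ∑_{j=1}^N (ξ_j − ξ_{j+m})² ≤ σ_m ∑_{j=1}^N (ξ_j − ξ_{j+1})², i.e. the quadratic form S_m[ξ] = ∑_j { (ξ_j − ξ_{j+m})² − σ_m (ξ_j − ξ_{j+1})² } on ℝ^N is negative semidefinite. -/

import Mathlib

open Real

open Finset

lemma sinQ (m : ℕ) : ∀ a b : ℝ, 0 ≤ a → a ≤ b → b ≤ π/2 → (m:ℝ) * b ≤ π →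
    Real.sin (m * b) * Real.sin a ≤ Real.sin (m * a) * Real.sin b := by
  induction m with
  | zero => simp
  | succ k ih =>
    intro a b ha hab hb2 hmb
    have hb : 0 ≤ b := le_trans ha hab
    have hkb : (k:ℝ) * b ≤ π := by push_cast at hmb ⊢; nlinarith
    have h1 := ih a b ha hab hb2 hkb
    have hka : (k:ℝ) * a ≤ (k:ℝ) * b := mul_le_mul_of_nonneg_left hab (Nat.cast_nonneg k)
    have hcosab : Real.cos b ≤ Real.cos a :=
      Real.cos_le_cos_of_nonneg_of_le_pi ha (by linarith [Real.pi_pos]) hab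
    have hcosk : Real.cos ((k:ℝ) * b) ≤ Real.cos ((k:ℝ) * a) :=
      Real.cos_le_cos_of_nonneg_of_le_pi (by positivity) hkb hka
    have hcosb : 0 ≤ Real.cos b := Real.cos_nonneg_of_mem_Icc ⟨by linarith [Real.pi_pos], hb2⟩
    have hsa : 0 ≤ Real.sin a := Real.sin_nonneg_of_nonneg_of_le_pi ha (by linarith [Real.pi_pos])
    have hsb : 0 ≤ Real.sin b := Real.sin_nonneg_of_nonneg_of_le_pi hb (by linarith [Real.pi_pos])
    have hska : 0 ≤ Real.sin ((k:ℝ) * a) :=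
      Real.sin_nonneg_of_nonneg_of_le_pi (by positivity) (le_trans hka hkb)
    have e1 : ((k:ℕ)+1 : ℝ) * a = (k:ℝ)*a + a := by ring
    have e2 : ((k:ℕ)+1 : ℝ) * b = (k:ℝ)*b + b := by ring
    push_cast
    rw [e1, e2, Real.sin_add, Real.sin_add]
    nlinarith [mul_le_mul_of_nonneg_right h1 hcosb,
      mul_le_mul_of_nonneg_right hcosab (mul_nonneg hska hsb),
      mul_le_mul_of_nonneg_right hcosk (mul_nonneg hsa hsb)]


lemma sin_sq_nat_pi_add (q : ℕ) (y : ℝ) : Real.sin (q*π + y)^2 = Real.sin y ^2 := by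
  rw [Real.sin_add, Real.sin_nat_mul_pi, zero_mul, zero_add, mul_pow]
  have h := Real.sin_sq_add_cos_sq ((q:ℝ)*π)
  rw [Real.sin_nat_mul_pi] at h
  nlinarith [h]

lemma sin_sq_nat_pi_sub (q : ℕ) (y : ℝ) : Real.sin (q*π - y)^2 = Real.sin y ^2 := by
  have h := sin_sq_nat_pi_add q (-y)
  rw [← sub_eq_add_neg] at h
  rw [h, Real.sin_neg]; ring

lemma KIx {N m : ℕ} (hN : 3 ≤ N) (hm : 2 ≤ m) (hmN : 2*m ≤ N) {x : ℝ}
    (h1 : π/N ≤ x) (h2 : x ≤ π/2) :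
    Real.sin ((m:ℝ) * x)^2 * Real.sin (π/N)^2 ≤ Real.sin (π * m / N)^2 * Real.sin x^2 := by
  have hπ := Real.pi_pos
  have hN0 : (0:ℝ) < N := by positivity
  have hN3 : (3:ℝ) ≤ N := by exact_mod_cast hN
  have hm0 : (0:ℝ) < m := by positivity
  have hm2 : (2:ℝ) ≤ m := by exact_mod_cast hm
  have hmN' : (m:ℝ) * 2 ≤ N := by exact_mod_cast by linarith [hmN]
  have hx0 : 0 < x := lt_of_lt_of_le (by positivity) h1
  have hsx : 0 ≤ Real.sin x := Real.sin_nonneg_of_nonneg_of_le_pi hx0.le (by linarith)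
  have hsπN : 0 < Real.sin (π/N) :=
    Real.sin_pos_of_pos_of_lt_pi (by positivity) (by rw [div_lt_iff₀ hN0]; nlinarith)
  have hmπN2 : π * m / N ≤ π / 2 := by rw [div_le_div_iff₀ hN0 two_pos]; nlinarith
  have hsmπN : 0 ≤ Real.sin (π * m / N) :=
    Real.sin_nonneg_of_nonneg_of_le_pi (by positivity) (by linarith)
  rcases le_or_gt x (π/m) with hxm | hxm
  · have hmx : (m:ℝ) * x ≤ π := by rw [le_div_iff₀ hm0] at hxm; linarith
    have key := sinQ m (π/N) x (by positivity) h1 h2 hmx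
    have hsmx : 0 ≤ Real.sin ((m:ℝ)*x) :=
      Real.sin_nonneg_of_nonneg_of_le_pi (by positivity) hmx
    have e : (m:ℝ) * (π/N) = π * m / N := by ring
    rw [e] at key
    calc Real.sin ((m:ℝ) * x)^2 * Real.sin (π/N)^2
        = (Real.sin ((m:ℝ)*x) * Real.sin (π/N))^2 := by ring
      _ ≤ (Real.sin (π*m/N) * Real.sin x)^2 :=
          pow_le_pow_left₀ (mul_nonneg hsmx hsπN.le) key 2
      _ = Real.sin (π * m / N)^2 * Real.sin x^2 := by ring
  · -- bounded regime
    have hsinm : 2/(m:ℝ) ≤ Real.sin (π/m) := by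
      have h := Real.mul_le_sin (x := π/m) (by positivity)
        (by gcongr)
      calc 2/(m:ℝ) = 2/π * (π/m) := by field_simp
        _ ≤ _ := h
    have hsinmN : 2*(m:ℝ)/N ≤ Real.sin (π*m/N) := by
      have h := Real.mul_le_sin (x := π*m/N) (by positivity) hmπN2
      calc 2*(m:ℝ)/N = 2/π * (π*m/N) := by field_simp
        _ ≤ _ := h
    have hsx' : Real.sin (π/m) ≤ Real.sin x :=
      Real.sin_le_sin_of_le_of_le_pi_div_two (by nlinarith [div_nonneg hπ.le hm0.le]) h2 hxm.le
    have hπN : Real.sin (π/N) ≤ π/N := Real.sin_le (by positivity)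
    have hkey : Real.sin (π/N) ≤ Real.sin (π*m/N) * Real.sin x := by
      have h4 : (4:ℝ)/N ≤ Real.sin (π*m/N) * Real.sin x := by
        have t1 : 2*(m:ℝ)/N * (2/m) ≤ Real.sin (π*m/N) * Real.sin x := by
          apply mul_le_mul hsinmN (le_trans hsinm hsx') (by positivity) hsmπN
        have e : 2*(m:ℝ)/N * (2/m) = 4/N := by field_simp; ring
        linarith [e ▸ t1]
      have h5 : π/N ≤ 4/N := by
        gcongr
        linarith [Real.pi_lt_d2]
      linarith
    have hsq : Real.sin (π/N)^2 ≤ (Real.sin (π*m/N) * Real.sin x)^2 :=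
      pow_le_pow_left₀ hsπN.le hkey 2
    have hb : Real.sin ((m:ℝ)*x)^2 ≤ 1 := by
      nlinarith [Real.neg_one_le_sin ((m:ℝ)*x), Real.sin_le_one ((m:ℝ)*x)]
    nlinarith [sq_nonneg (Real.sin (π/N)), hsq]

lemma keyIneq0 {N m : ℕ} (hN : 3 ≤ N) (hm : 2 ≤ m) (hmN : 2*m ≤ N) (v : ℕ) (hv : 2*v ≤ N) :
    Real.sin (π * m * v / N) ^2 * Real.sin (π / N)^2 ≤
      Real.sin (π * m / N)^2 * Real.sin (π * v / N)^2 := by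
  rcases Nat.eq_zero_or_pos v with h0 | h1
  · simp [h0]
  · have hπ := Real.pi_pos
    have hN0 : (0:ℝ) < N := by positivity
    have hv1 : (1:ℝ) ≤ v := by exact_mod_cast h1
    have hv2 : 2*(v:ℝ) ≤ N := by exact_mod_cast hv
    have h1' : π/N ≤ π*v/N := by gcongr; nlinarith
    have h2' : π*(v:ℝ)/N ≤ π/2 := by rw [div_le_div_iff₀ hN0 two_pos]; nlinarith
    have h := KIx hN hm hmN h1' h2'
    have e : (m:ℝ) * (π*v/N) = π*m*v/N := by ring
    rw [e] at h
    exact h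

lemma keyIneq {N m : ℕ} (hN : 3 ≤ N) (hm : 2 ≤ m) (hmN : 2*m ≤ N) (v : ℕ) (hv : v ≤ N) :
    Real.sin (π * m * v / N) ^2 * Real.sin (π / N)^2 ≤
      Real.sin (π * m / N)^2 * Real.sin (π * v / N)^2 := by
  rcases le_or_gt (2*v) N with h | h
  · exact keyIneq0 hN hm hmN v h
  · have hw : 2*(N-v) ≤ N := by omega
    have key := keyIneq0 hN hm hmN (N-v) hw
    have hN0 : (0:ℝ) < N := by positivity
    have hvN : ((N-v:ℕ):ℝ) = (N:ℝ) - v := by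
      push_cast [Nat.cast_sub hv]; ring
    rw [hvN] at key
    have s1 : Real.sin (π*((N:ℝ)-v)/N)^2 = Real.sin (π*v/N)^2 := by
      rw [show π*((N:ℝ)-v)/N = ((1:ℕ):ℝ)*π - π*v/N by push_cast; field_simp]
      exact sin_sq_nat_pi_sub 1 _
    have s2 : Real.sin (π*(m:ℝ)*((N:ℝ)-v)/N)^2 = Real.sin (π*m*v/N)^2 := by
      rw [show π*(m:ℝ)*((N:ℝ)-v)/N = ((m:ℕ):ℝ)*π - π*m*v/N by field_simp]
      exact sin_sq_nat_pi_sub m _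
    rw [s1, s2] at key
    exact key

lemma conj_stdAddChar {N : ℕ} [NeZero N] (x : ZMod N) :
    (starRingEnd ℂ) (ZMod.stdAddChar x) = ZMod.stdAddChar (-x) := by
  rw [ZMod.stdAddChar_apply, ZMod.stdAddChar_apply, ← Circle.coe_inv_eq_conj,
    ← AddChar.map_neg_eq_inv]

lemma dft_parseval {N : ℕ} [NeZero N] (Φ : ZMod N → ℂ) :
    ∑ r : ZMod N, Complex.normSq (ZMod.dft Φ r) = (N:ℝ) * ∑ j, Complex.normSq (Φ j) := by
  classical
  have key : ∑ r : ZMod N, (ZMod.dft Φ r * (starRingEnd ℂ) (ZMod.dft Φ r))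
      = (N:ℂ) * ∑ j, (Φ j * (starRingEnd ℂ) (Φ j)) := by
    have expand : ∀ r : ZMod N, ZMod.dft Φ r * (starRingEnd ℂ) (ZMod.dft Φ r)
        = ∑ j, ∑ i, (Φ j * (starRingEnd ℂ) (Φ i)) * ZMod.stdAddChar ((i - j) * r) := by
      intro r
      rw [ZMod.dft_apply]
      simp only [smul_eq_mul, map_sum, map_mul, conj_stdAddChar, neg_neg]
      rw [sum_mul_sum]
      refine Finset.sum_congr rfl fun j _ => Finset.sum_congr rfl fun i _ => ?_
      have h : ZMod.stdAddChar (-(j*r)) * ZMod.stdAddChar (i*r)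
          = ZMod.stdAddChar ((i - j) * r) := by
        rw [← AddChar.map_add_eq_mul]; congr 1; ring
      calc ZMod.stdAddChar (-(j * r)) * Φ j * (ZMod.stdAddChar (i * r) * (starRingEnd ℂ) (Φ i))
          = (Φ j * (starRingEnd ℂ) (Φ i)) * (ZMod.stdAddChar (-(j*r)) * ZMod.stdAddChar (i*r)) := by
            ring
        _ = _ := by rw [h]
    calc ∑ r : ZMod N, (ZMod.dft Φ r * (starRingEnd ℂ) (ZMod.dft Φ r))
        = ∑ r : ZMod N, ∑ j, ∑ i, (Φ j * (starRingEnd ℂ) (Φ i)) * ZMod.stdAddChar ((i - j) * r) := by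
          exact Finset.sum_congr rfl fun r _ => expand r
      _ = ∑ j, ∑ i, ∑ r : ZMod N, (Φ j * (starRingEnd ℂ) (Φ i)) * ZMod.stdAddChar ((i - j) * r) := by
          rw [Finset.sum_comm]
          exact Finset.sum_congr rfl fun j _ => Finset.sum_comm
      _ = ∑ j, ∑ i, (Φ j * (starRingEnd ℂ) (Φ i)) * ∑ r : ZMod N, ZMod.stdAddChar ((i - j) * r) := by
          simp only [Finset.mul_sum]
      _ = ∑ j, ∑ i, (Φ j * (starRingEnd ℂ) (Φ i)) * (if i - j = 0 then (N:ℂ) else 0) := by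
          refine Finset.sum_congr rfl fun j _ => Finset.sum_congr rfl fun i _ => ?_
          congr 1
          have := AddChar.sum_mulShift (ψ := ZMod.stdAddChar) (i - j)
            (ZMod.isPrimitive_stdAddChar N)
          simp only [mul_comm] at this ⊢
          rw [this, ZMod.card]
          split_ifs <;> simp
      _ = (N:ℂ) * ∑ j, (Φ j * (starRingEnd ℂ) (Φ j)) := by
          rw [Finset.mul_sum]
          refine Finset.sum_congr rfl fun j _ => ?_
          simp only [sub_eq_zero, mul_ite, mul_zero]
          rw [Finset.sum_ite_eq' Finset.univ j (fun i => Φ j * (starRingEnd ℂ) (Φ i) * N)]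
          simp [mul_comm]
  simp only [Complex.mul_conj] at key
  exact_mod_cast key

lemma dft_shift {N : ℕ} [NeZero N] (Φ : ZMod N → ℂ) (k r : ZMod N) :
    ZMod.dft (fun j => Φ (j + k)) r = ZMod.stdAddChar (k * r) * ZMod.dft Φ r := by
  rw [ZMod.dft_apply, ZMod.dft_apply]
  simp only [smul_eq_mul]
  rw [Finset.mul_sum]
  refine Fintype.sum_equiv (Equiv.addRight k) _ _ fun j => ?_
  simp only [Equiv.coe_addRight]
  rw [← mul_assoc, ← AddChar.map_add_eq_mul]
  congr 2
  ring

lemma normSq_one_sub_stdAddChar {N : ℕ} [NeZero N] (t : ZMod N) :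
    Complex.normSq (1 - ZMod.stdAddChar t) = 4 * Real.sin (π * t.val / N)^2 := by
  have h1 : ZMod.stdAddChar t = Complex.exp ((2*π*t.val/N : ℝ) * Complex.I) := by
    conv_lhs => rw [← ZMod.natCast_zmod_val t]
    rw [show ((t.val : ZMod N)) = ((t.val : ℤ) : ZMod N) by push_cast; rfl]
    rw [ZMod.stdAddChar_coe]
    congr 1
    push_cast
    ring
  rw [h1, Complex.exp_mul_I]
  have h2 : (1:ℂ) - (Complex.cos ((2*π*t.val/N : ℝ):ℂ) + Complex.sin ((2*π*t.val/N :ℝ):ℂ) * Complex.I)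
      = ((1 - Real.cos (2*π*t.val/N) : ℝ) : ℂ) + ((-(Real.sin (2*π*t.val/N)) : ℝ):ℂ) * Complex.I := by
    rw [← Complex.ofReal_cos, ← Complex.ofReal_sin]
    push_cast
    ring
  rw [h2, Complex.normSq_add_mul_I]
  have hhalf := Real.sin_sq_eq_half_sub (π * t.val / N)
  have e2 : 2 * (π * t.val / N) = 2*π*t.val/N := by ring
  rw [e2] at hhalf
  nlinarith [Real.sin_sq_add_cos_sq (2*π*t.val/N)]
lemma sin_sq_pi_mod (N : ℕ) [NeZero N] (a : ℕ) :
    Real.sin (π * a / N)^2 = Real.sin (π * ((a % N : ℕ) : ℝ) / N)^2 := by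
  have hN0 : (N:ℝ) ≠ 0 := Nat.cast_ne_zero.mpr (NeZero.ne N)
  conv_lhs => rw [← Nat.div_add_mod a N]
  rw [show (π * ((N * (a/N) + a % N : ℕ) : ℝ) / N : ℝ)
      = ((a/N : ℕ):ℝ) * π + π * ((a % N : ℕ):ℝ)/N by push_cast; field_simp]
  exact sin_sq_nat_pi_add _ _

lemma master {N : ℕ} [NeZero N] (ξ : ZMod N → ℝ) (k : ZMod N) :
    (N:ℝ) * ∑ j : ZMod N, (ξ j - ξ (j + k))^2
      = ∑ r : ZMod N, (4 * Real.sin (π * (k*r).val / N)^2)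
          * Complex.normSq (ZMod.dft (fun j => ((ξ j : ℝ) : ℂ)) r) := by
  set Φ : ZMod N → ℂ := fun j => ((ξ j : ℝ) : ℂ) with hΦ
  have hD : ZMod.dft (Φ - fun j => Φ (j + k))
      = fun r => (1 - ZMod.stdAddChar (k*r)) * ZMod.dft Φ r := by
    ext r
    rw [map_sub]
    simp only [Pi.sub_apply]
    rw [dft_shift]
    ring
  have hP := dft_parseval (Φ - fun j => Φ (j+k))
  rw [hD] at hP
  calc (N:ℝ) * ∑ j : ZMod N, (ξ j - ξ (j + k))^2
      = (N:ℝ) * ∑ j : ZMod N, Complex.normSq ((Φ - fun j => Φ (j+k)) j) := by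
        congr 1
        refine Finset.sum_congr rfl fun j _ => ?_
        have he : (Φ - fun j => Φ (j+k)) j = ((ξ j - ξ (j+k) : ℝ) : ℂ) := by
          simp [hΦ]
        rw [he, Complex.normSq_ofReal, sq]
    _ = ∑ r : ZMod N, Complex.normSq ((1 - ZMod.stdAddChar (k*r)) * ZMod.dft Φ r) := hP.symm
    _ = _ := by
        refine Finset.sum_congr rfl fun r _ => ?_
        rw [map_mul, normSq_one_sub_stdAddChar]

/-- Let `N ≥ 3`, `2 ≤ m ≤ ⌊N/2⌋`, and `σ_m = sin²(πm/N)/sin²(π/N)`. Then for every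
cyclically indexed `ξ : ℤ/Nℤ → ℝ`,
`∑_j (ξ_j − ξ_{j+m})² ≤ σ_m ∑_j (ξ_j − ξ_{j+1})²`,
i.e. the circulant quadratic form `S_m` is negative semidefinite. -/
theorem circulant_form_negSemidef (N : ℕ) [NeZero N] (hN : 3 ≤ N) (m : ℕ)
    (hm : 2 ≤ m) (hmN : m ≤ N / 2) (ξ : ZMod N → ℝ) :
    ∑ j : ZMod N, (ξ j - ξ (j + (m : ZMod N))) ^ 2 ≤
      (Real.sin (Real.pi * m / N) ^ 2 / Real.sin (Real.pi / N) ^ 2) *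
        ∑ j : ZMod N, (ξ j - ξ (j + 1)) ^ 2 := by
  have hπ := Real.pi_pos
  have hN0 : (0:ℝ) < N := by
    have : 0 < N := by omega
    exact_mod_cast this
  have hmN2 : 2 * m ≤ N := by omega
  have hsπN : 0 < Real.sin (π/N) := by
    apply Real.sin_pos_of_pos_of_lt_pi (by positivity)
    rw [div_lt_iff₀ hN0]
    nlinarith [mul_le_mul_of_nonneg_left (show (3:ℝ) ≤ N from by exact_mod_cast hN) hπ.le]
  have hs2 : 0 < Real.sin (π/N)^2 := by positivity
  set Φ : ZMod N → ℂ := fun j => ((ξ j : ℝ) : ℂ) with hΦ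
  set W : ZMod N → ℝ := fun r => Complex.normSq (ZMod.dft Φ r) with hW
  have hWpos : ∀ r, 0 ≤ W r := fun r => Complex.normSq_nonneg _
  have hMm := master ξ (m : ZMod N)
  have hM1 := master ξ (1 : ZMod N)
  -- rewrite the sin arguments
  have hvm : ∀ r : ZMod N, Real.sin (π * (((m : ZMod N)*r).val : ℕ) / N)^2
      = Real.sin (π * ((m * r.val : ℕ) : ℝ) / N)^2 := by
    intro r
    have : ((m : ZMod N) * r) = ((m * r.val : ℕ) : ZMod N) := by
      conv_rhs => rw [Nat.cast_mul, ZMod.natCast_zmod_val]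
    rw [this, ZMod.val_natCast]
    exact (sin_sq_pi_mod N (m * r.val)).symm
  have hv1 : ∀ r : ZMod N, Real.sin (π * (((1 : ZMod N)*r).val : ℕ) / N)^2
      = Real.sin (π * (r.val : ℝ) / N)^2 := by
    intro r
    rw [one_mul]
  -- pointwise inequality
  have hpt : ∀ r : ZMod N,
      (4 * Real.sin (π * ((m * r.val : ℕ) : ℝ) / N)^2 * W r) * Real.sin (π/N)^2
        ≤ Real.sin (π * m / N)^2 * (4 * Real.sin (π * (r.val : ℝ) / N)^2 * W r) := by
    intro r
    have hk := keyIneq hN hm hmN2 r.val (le_of_lt (ZMod.val_lt r))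
    have harg : (π * ((m * r.val : ℕ) : ℝ) / N) = π * (m:ℝ) * (r.val : ℝ) / N := by
      push_cast; ring
    rw [harg]
    nlinarith [mul_le_mul_of_nonneg_right hk (hWpos r)]
  -- sum it up
  have hsum : ((N:ℝ) * ∑ j : ZMod N, (ξ j - ξ (j + (m:ZMod N)))^2) * Real.sin (π/N)^2
      ≤ Real.sin (π * m / N)^2 * ((N:ℝ) * ∑ j : ZMod N, (ξ j - ξ (j + 1))^2) := by
    rw [hMm, hM1]
    rw [Finset.sum_mul, Finset.mul_sum]
    apply Finset.sum_le_sum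
    intro r _
    have := hpt r
    rw [← hvm r] at this
    rw [← hv1 r] at this
    exact this
  rw [div_mul_eq_mul_div, le_div_iff₀ hs2]
  have hN0' : (0:ℝ) < N := hN0
  nlinarith [hsum]
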